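/- The Ricci tensor of the Gödel metric is not of Codazzi type: at every point of ℝ⁴ there exist indices i, j, k with S_{ij,k} ≠ S_{kj,i} (for instance S₂₂,₁ = e^{2x¹} while S₁₂,₂ = −(1/2)e^{2x¹}). -/

import Mathlib

noncomputable section

open scoped BigOperators

/-- A point of `ℝⁿ`. -/
abbrev Pt (n : ℕ) := Fin n → ℝ
/-- A (0,2)-tensor field on `ℝⁿ`, given by its components. -/
abbrev Ten2 (n : ℕ) := Pt n → Fin n → Fin n → ℝ
/-- A (0,4)-tensor field on `ℝⁿ`, given by its components. -/
abbrev Ten4 (n : ℕ) := Pt n → Fin n → Fin n → Fin n → Fin n → ℝ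

variable {n : ℕ}

/-- Partial derivative `∂ᵢ f` at `x`. -/
def pderiv (i : Fin n) (f : Pt n → ℝ) (x : Pt n) : ℝ :=
  fderiv ℝ f x (Pi.single i 1)

/-- Components `g^{ij}` of the inverse of the metric. -/
def ginv (g : Ten2 n) (x : Pt n) (i j : Fin n) : ℝ :=
  (Matrix.of (g x))⁻¹ i j

/-- Christoffel symbols of the second kind, `Γ^h_{ij}` as a function of the point. -/
def christoffel (g : Ten2 n) (h i j : Fin n) (x : Pt n) : ℝ :=
  (1/2) * ∑ l, ginv g x h l *
    (pderiv i (fun y => g y l j) x + pderiv j (fun y => g y i l) x - pderiv l (fun y => g y i j) x)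

/-- Curvature components `R^h_{ijk}`. -/
def curvUp (g : Ten2 n) (h i j k : Fin n) (x : Pt n) : ℝ :=
  pderiv j (christoffel g h i k) x - pderiv k (christoffel g h i j) x
    + ∑ l, christoffel g h j l x * christoffel g l i k x
    - ∑ l, christoffel g h k l x * christoffel g l i j x

/-- The (0,4) Riemann–Christoffel curvature tensor `R_{hijk} = g_{hl} R^l_{ijk}`. -/
def riemann (g : Ten2 n) : Ten4 n := fun x h i j k => ∑ l, g x h l * curvUp g l i j k x

/-- The Ricci tensor `S_{ij} = R^k_{ikj}`. -/
def ricci (g : Ten2 n) : Ten2 n := fun x i j => ∑ k, curvUp g k i k j x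

/-- The scalar curvature `κ = g^{ij} S_{ij}`. -/
def scalarCurv (g : Ten2 n) (x : Pt n) : ℝ := ∑ i, ∑ j, ginv g x i j * ricci g x i j

/-- Components `S_{ij,k}` of the covariant derivative of the Ricci tensor. -/
def ricciCov (g : Ten2 n) (x : Pt n) (i j k : Fin n) : ℝ :=
  pderiv k (fun y => ricci g y i j) x
    - ∑ l, christoffel g l k i x * ricci g x l j
    - ∑ l, christoffel g l k j x * ricci g x i l

/-- The Kulkarni–Nomizu product of two symmetric (0,2)-tensors. -/
def kn (A B : Ten2 n) : Ten4 n := fun x X1 X2 X3 X4 =>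
  A x X1 X4 * B x X2 X3 + A x X2 X3 * B x X1 X4 - A x X1 X3 * B x X2 X4 - A x X2 X4 * B x X1 X3

/-- The Gaussian curvature tensor `G = (1/2) g ∧ g`. -/
def Gten (g : Ten2 n) : Ten4 n := fun x i j k l => (1/2) * kn g g x i j k l

/-- The Weyl conformal curvature tensor
`C = R − (1/(n−2)) g∧S + (κ/((n−2)(n−1))) G`. -/
def weyl (g : Ten2 n) : Ten4 n := fun x h i j k =>
  riemann g x h i j k - (1/((n:ℝ)-2)) * kn g (ricci g) x h i j k
    + (scalarCurv g x / (((n:ℝ)-2)*((n:ℝ)-1))) * Gten g x h i j k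

/-- The conharmonic curvature tensor `conh(R) = R − (1/(n−2)) g∧S`. -/
def conh (g : Ten2 n) : Ten4 n := fun x h i j k =>
  riemann g x h i j k - (1/((n:ℝ)-2)) * kn g (ricci g) x h i j k

/-- The concircular curvature tensor `K = R − (κ/(n(n−1))) G`. -/
def concirc (g : Ten2 n) : Ten4 n := fun x h i j k =>
  riemann g x h i j k - (scalarCurv g x / ((n:ℝ)*((n:ℝ)-1))) * Gten g x h i j k

/-- The (0,6)-tensor `T·T'` for (0,4)-tensors `T, T'`: the curvature-type tensor `T`
acts as a derivation (through the endomorphisms `𝒯(X,Y)` with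
`g(𝒯(X,Y)Z,W) = T(X,Y,Z,W)`) on the (0,4)-tensor `T'`. -/
def dot44 (g : Ten2 n) (T T' : Ten4 n) :
    Pt n → Fin n → Fin n → Fin n → Fin n → Fin n → Fin n → ℝ :=
  fun x h i j k l m =>
  -(∑ r, ∑ s, ginv g x r s *
    (T x l m h s * T' x r i j k + T x l m i s * T' x h r j k
      + T x l m j s * T' x h i r k + T x l m k s * T' x h i j r))

/-- The (0,4)-tensor `T·A` for a (0,4)-tensor `T` acting on a (0,2)-tensor `A`. -/
def dot42 (g : Ten2 n) (T : Ten4 n) (A : Ten2 n) :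
    Pt n → Fin n → Fin n → Fin n → Fin n → ℝ :=
  fun x i j l m =>
  -(∑ r, ∑ s, ginv g x r s * (T x l m i s * A x r j + T x l m j s * A x i r))

/-- The Tachibana tensor `Q(A,T')` of a symmetric (0,2)-tensor `A`
and a (0,4)-tensor `T'`, built from the endomorphisms `X ∧_A Y`. -/
def tach4 (A : Ten2 n) (T' : Ten4 n) :
    Pt n → Fin n → Fin n → Fin n → Fin n → Fin n → Fin n → ℝ :=
  fun x h i j k l m =>
  -((A x m h * T' x l i j k - A x l h * T' x m i j k)
    + (A x m i * T' x h l j k - A x l i * T' x h m j k)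
    + (A x m j * T' x h i l k - A x l j * T' x h i m k)
    + (A x m k * T' x h i j l - A x l k * T' x h i j m))

/-- The Tachibana tensor `Q(A,B)` of a symmetric (0,2)-tensor `A`
and a (0,2)-tensor `B`. -/
def tach2 (A B : Ten2 n) : Pt n → Fin n → Fin n → Fin n → Fin n → ℝ :=
  fun x i j l m =>
  -((A x m i * B x l j - A x l i * B x m j) + (A x m j * B x i l - A x l j * B x i m))

/-- The Gödel metric on `ℝ⁴`: `g₁₁ = −a²`, `g₂₂ = (a²/2)e^{2x¹}`, `g₃₃ = −a²`,
`g₄₄ = a²`, `g₂₄ = g₄₂ = a²e^{x¹}`, all other components zero. -/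
def godel (a : ℝ) : Ten2 4 := fun x i j =>
  ![![-a^2, 0, 0, 0],
    ![0, a^2/2 * Real.exp (2 * x 0), 0, a^2 * Real.exp (x 0)],
    ![0, 0, -a^2, 0],
    ![0, a^2 * Real.exp (x 0), 0, a^2]] i j

namespace GodelAux

lemma pderiv_const {n : ℕ} (c : ℝ) (i : Fin n) (x : Pt n) : pderiv i (fun _ => c) x = 0 := by
  simp [pderiv]

lemma pderiv_cexp {n : ℕ} (c k : ℝ) (i : Fin (n+1)) (x : Pt (n+1)) :
    pderiv i (fun y => c * Real.exp (k * y 0)) x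
      = if i = 0 then c * k * Real.exp (k * x 0) else 0 := by
  have h0 : HasFDerivAt (fun y : Pt (n+1) => y 0)
      (ContinuousLinearMap.proj 0 : Pt (n+1) →L[ℝ] ℝ) x := hasFDerivAt_apply 0 x
  have h1 : HasFDerivAt (fun y : Pt (n+1) => k * y 0)
      (k • (ContinuousLinearMap.proj 0 : Pt (n+1) →L[ℝ] ℝ)) x := h0.const_mul k
  have h2 := (Real.hasDerivAt_exp (k * x 0)).comp_hasFDerivAt x h1
  have h3 : HasFDerivAt (fun y : Pt (n+1) => c * Real.exp (k * y 0))
      (c • Real.exp (k * x 0) • k • (ContinuousLinearMap.proj 0 : Pt (n+1) →L[ℝ] ℝ)) x :=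
    h2.const_mul c
  rw [pderiv, h3.fderiv]
  rcases eq_or_ne i 0 with h | h <;>
    simp [h, ContinuousLinearMap.proj, Pi.single_apply, Ne.symm] <;> ring

lemma pderiv_cexp1 {n : ℕ} (c : ℝ) (i : Fin (n+1)) (x : Pt (n+1)) :
    pderiv i (fun y => c * Real.exp (y 0)) x = if i = 0 then c * Real.exp (x 0) else 0 := by
  have h : (fun y : Pt (n+1) => c * Real.exp (y 0)) = fun y => c * Real.exp (1 * y 0) := by
    funext y; rw [one_mul]
  rw [h, pderiv_cexp]; split <;> ring

/-- Explicit inverse of the Gödel metric. -/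
def gI (a : ℝ) (x : Pt 4) : Matrix (Fin 4) (Fin 4) ℝ :=
  ![![-1/a^2, 0, 0, 0],
    ![0, -2/(a^2 * Real.exp (x 0)^2), 0, 2/(a^2 * Real.exp (x 0))],
    ![0, 0, -1/a^2, 0],
    ![0, 2/(a^2 * Real.exp (x 0)), 0, -1/a^2]]

lemma ginv_godel {a : ℝ} (ha : a ≠ 0) (x : Pt 4) (i j : Fin 4) :
    ginv (godel a) x i j = gI a x i j := by
  have he : Real.exp (2 * x 0) = Real.exp (x 0) * Real.exp (x 0) := by
    rw [two_mul, Real.exp_add]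
  have h : Matrix.of (godel a x) * gI a x = 1 := by
    ext i j
    fin_cases i <;> fin_cases j <;>
      (try simp only [Matrix.mul_apply]) <;>
      (try simp [Matrix.mul_apply, Fin.sum_univ_four, godel, gI, Matrix.one_apply, he]) <;>
      (try field_simp) <;> (try ring) <;> (try simp [Matrix.vecHead, Matrix.vecTail])
  rw [ginv, Matrix.inv_eq_right_inv h]


/-- Coefficients of the Christoffel symbols of the Gödel metric:
`Γʰᵢⱼ(x) = CC h i j * exp (KK h i j * x¹)`. -/
def CC : Fin 4 → Fin 4 → Fin 4 → ℝ :=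
  ![![![0,0,0,0],![0,1/2,0,1/2],![0,0,0,0],![0,1/2,0,0]],
    ![![0,0,0,-1],![0,0,0,0],![0,0,0,0],![-1,0,0,0]],
    ![![0,0,0,0],![0,0,0,0],![0,0,0,0],![0,0,0,0]],
    ![![0,1/2,0,1],![1/2,0,0,0],![0,0,0,0],![1,0,0,0]]]

/-- Exponents of the Christoffel symbols of the Gödel metric. -/
def KK : Fin 4 → Fin 4 → Fin 4 → ℝ :=
  ![![![0,0,0,0],![0,2,0,1],![0,0,0,0],![0,1,0,0]],
    ![![0,0,0,-1],![0,0,0,0],![0,0,0,0],![-1,0,0,0]],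
    ![![0,0,0,0],![0,0,0,0],![0,0,0,0],![0,0,0,0]],
    ![![0,1,0,0],![1,0,0,0],![0,0,0,0],![0,0,0,0]]]

set_option maxHeartbeats 2000000 in
lemma christoffel_godel {a : ℝ} (ha : a ≠ 0) (h i j : Fin 4) :
    christoffel (godel a) h i j = fun y => CC h i j * Real.exp (KK h i j * y 0) := by
  funext y
  have he : Real.exp (2 * y 0) = Real.exp (y 0) * Real.exp (y 0) := by
    rw [two_mul, Real.exp_add]
  fin_cases h <;> fin_cases i <;> fin_cases j <;>
    (try simp [christoffel, Fin.sum_univ_four, ginv_godel ha, gI, godel, CC, KK,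
      pderiv_cexp, pderiv_cexp1, pderiv_const, he, Real.exp_neg]) <;>
    (try field_simp) <;> (try ring) <;> (try simp [Matrix.vecHead, Matrix.vecTail])


/-- Coefficients of the Ricci tensor of the Gödel metric:
`Sᵢⱼ(x) = SC i j * exp (SK i j * x¹)`. -/
def SC : Fin 4 → Fin 4 → ℝ := ![![0,0,0,0],![0,1,0,1],![0,0,0,0],![0,1,0,1]]

/-- Exponents of the Ricci tensor of the Gödel metric. -/
def SK : Fin 4 → Fin 4 → ℝ := ![![0,0,0,0],![0,2,0,1],![0,0,0,0],![0,1,0,0]]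

set_option maxHeartbeats 2000000 in
lemma ricci_godel {a : ℝ} (ha : a ≠ 0) (y : Pt 4) (i j : Fin 4) :
    ricci (godel a) y i j = SC i j * Real.exp (SK i j * y 0) := by
  have he : Real.exp (2 * y 0) = Real.exp (y 0) * Real.exp (y 0) := by
    rw [two_mul, Real.exp_add]
  fin_cases i <;> fin_cases j <;>
    (try simp only [ricci, curvUp, Fin.sum_univ_four, christoffel_godel ha, pderiv_cexp]) <;>
    (try simp [CC, KK, SC, SK, he, Real.exp_neg]) <;>
    (try field_simp) <;> (try ring) <;> (try simp [Matrix.vecHead, Matrix.vecTail]) <;> (try ring)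

end GodelAux

/-- The Ricci tensor of the Gödel metric is not of Codazzi type:
at every point there are indices `i, j, k` with `S_{ij,k} ≠ S_{kj,i}`;
for instance `S₂₂,₁ = e^{2x¹}` while `S₁₂,₂ = −(1/2)e^{2x¹}`. -/
theorem godel_ricci_not_codazzi (a : ℝ) (ha : 0 < a) :
    ∀ x : Pt 4,
      (ricciCov (godel a) x 1 1 0 = Real.exp (2 * x 0) ∧
        ricciCov (godel a) x 0 1 1 = -(1/2) * Real.exp (2 * x 0)) ∧
      ∃ i j k : Fin 4, ricciCov (godel a) x i j k ≠ ricciCov (godel a) x k j i := by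
  intro x
  have ha' : a ≠ 0 := ha.ne'
  have he : Real.exp (2 * x 0) = Real.exp (x 0) * Real.exp (x 0) := by
    rw [two_mul, Real.exp_add]
  have h1 : ricciCov (godel a) x 1 1 0 = Real.exp (2 * x 0) := by
    simp only [ricciCov, Fin.sum_univ_four, GodelAux.ricci_godel ha',
      GodelAux.christoffel_godel ha', GodelAux.pderiv_cexp]
    simp [GodelAux.CC, GodelAux.KK, GodelAux.SC, GodelAux.SK, he, Real.exp_neg]
    try field_simp
    try ring
  have h2 : ricciCov (godel a) x 0 1 1 = -(1/2) * Real.exp (2 * x 0) := by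
    simp only [ricciCov, Fin.sum_univ_four, GodelAux.ricci_godel ha',
      GodelAux.christoffel_godel ha', GodelAux.pderiv_cexp]
    simp [GodelAux.CC, GodelAux.KK, GodelAux.SC, GodelAux.SK, he, Real.exp_neg]
    try field_simp
    try ring
  refine ⟨⟨h1, h2⟩, 1, 1, 0, ?_⟩
  rw [h1, h2]
  intro hc
  nlinarith [Real.exp_pos (2 * x 0)]
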